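/- Let F = G − H with G, H : ℝⁿ → ℝ convex and H differentiable, and {x^k} a DCA sequence. Every cluster point x* of {x^k} satisfies ∇H(x*) ∈ ∂G(x*), provided G is continuous and ∇H is continuous. -/

import Mathlib

open Set Filter Topology
open scoped RealInnerProductSpace

/-- Gradient inequality for a convex function. -/
lemma grad_ineq_aux {n : ℕ} {H : EuclideanSpace ℝ (Fin n) → ℝ}
    (hH : ConvexOn ℝ univ H) {a g : EuclideanSpace ℝ (Fin n)}
    (hg : HasGradientAt H g a) (b : EuclideanSpace ℝ (Fin n)) :
    H a + ⟪g, b - a⟫ ≤ H b := by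
  set c : ℝ → EuclideanSpace ℝ (Fin n) := fun t => t • (b - a) + a with hc
  have hφ : ConvexOn ℝ univ (H ∘ c) := by
    have := hH.comp_affineMap
      (AffineMap.lineMap a b : ℝ →ᵃ[ℝ] EuclideanSpace ℝ (Fin n))
    have heq : (H ∘ (AffineMap.lineMap a b : ℝ →ᵃ[ℝ] EuclideanSpace ℝ (Fin n)))
        = H ∘ c := by
      funext t
      simp only [hc, AffineMap.lineMap_apply, Function.comp]
      module
    rw [heq] at this
    simpa using this
  have h0' : c 0 = a := by simp [hc]
  have hcderiv : HasDerivAt c (b - a) 0 := by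
    simpa [hc] using ((hasDerivAt_id (0 : ℝ)).smul_const (b - a)).add_const a
  have hderiv : HasDerivAt (H ∘ c) ⟪g, b - a⟫ 0 := by
    have hf : HasFDerivAt H ((InnerProductSpace.toDual ℝ (EuclideanSpace ℝ (Fin n))) g) (c 0) := by
      rw [h0']; exact hg.hasFDerivAt
    have := hf.comp_hasDerivAt 0 hcderiv
    simpa [InnerProductSpace.toDual_apply_apply] using this
  have hs := hφ.le_slope_of_hasDerivAt (mem_univ (0 : ℝ)) (mem_univ (1 : ℝ))
    zero_lt_one hderiv
  have h0 : c 0 = a := by simp [hc]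
  have h1 : c 1 = b := by simp [hc]
  rw [slope_def_field] at hs
  simp only [Function.comp, h0, h1] at hs
  have : ⟪g, b - a⟫ ≤ H b - H a := by
    simpa [div_one] using hs
  linarith

theorem dca_cluster_point_critical {n : ℕ}
    (G H : EuclideanSpace ℝ (Fin n) → ℝ)
    (H' : EuclideanSpace ℝ (Fin n) → EuclideanSpace ℝ (Fin n))
    (hG : ConvexOn ℝ univ G) (hH : ConvexOn ℝ univ H)
    (hGcont : Continuous G) (hH'cont : Continuous H')
    (hH' : ∀ x, HasGradientAt H (H' x) x)
    (x : ℕ → EuclideanSpace ℝ (Fin n))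
    (hiter : ∀ k, IsMinOn (fun z => G z - ⟪z, H' (x k)⟫) univ (x (k + 1)))
    (xstar : EuclideanSpace ℝ (Fin n))
    (hcluster : MapClusterPt xstar atTop x) :
    ∀ z, G xstar + ⟪H' xstar, z - xstar⟫ ≤ G z := by
  intro z
  -- reformulate the iteration property
  have hiter' : ∀ k w, G (x (k + 1)) - ⟪x (k + 1), H' (x k)⟫ ≤ G w - ⟪w, H' (x k)⟫ :=
    fun k w => hiter k (mem_univ w)
  have hgrad : ∀ a b, H a + ⟪H' a, b - a⟫ ≤ H b := fun a b =>
    grad_ineq_aux hH (hH' a) b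
  set F : EuclideanSpace ℝ (Fin n) → ℝ := fun y => G y - H y with hF
  -- F decreases along iterates
  have Fdec : ∀ k, F (x (k + 1)) ≤ F (x k) := by
    intro k
    have h1 := hiter' k (x k)
    have h2 := hgrad (x k) (x (k + 1))
    have e1 : ⟪H' (x k), x (k + 1) - x k⟫
        = ⟪x (k + 1), H' (x k)⟫ - ⟪x k, H' (x k)⟫ := by
      rw [inner_sub_right, real_inner_comm (x (k+1)), real_inner_comm (x k)]
    rw [e1] at h2
    simp only [hF]
    linarith
  have Fanti : Antitone (fun k => F (x k)) :=
    antitone_nat_of_succ_le Fdec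
  -- continuity of H and F
  have Hcont : Continuous H := by
    rw [continuous_iff_continuousAt]
    exact fun y => (hH' y).hasFDerivAt.differentiableAt.continuousAt
  have Fcont : Continuous F := hGcont.sub Hcont
  -- subsequence converging to xstar
  obtain ⟨ψ, hψmono, hψt⟩ := TopologicalSpace.FirstCountableTopology.tendsto_subseq hcluster
  have limF : Tendsto (fun j => F (x (ψ j))) atTop (𝓝 (F xstar)) :=
    (Fcont.continuousAt.tendsto).comp hψt
  -- lower bound for F along the sequence
  have Flb : ∀ m, F xstar ≤ F (x m) := by
    intro m
    refine le_of_tendsto limF ?_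
    filter_upwards [eventually_ge_atTop m] with j hj
    exact Fanti (le_trans hj (hψmono.le_apply))
  -- F (x (ψ j + 1)) → F xstar by squeeze
  have limF1 : Tendsto (fun j => F (x (ψ j + 1))) atTop (𝓝 (F xstar)) := by
    refine tendsto_of_tendsto_of_tendsto_of_le_of_le tendsto_const_nhds limF
      (fun j => Flb _) (fun j => Fdec _)
  -- key inequality
  have key : ∀ k, F (x (k + 1)) + H (x k) + ⟪H' (x k), z - x k⟫ ≤ G z := by
    intro k
    have h1 := hiter' k z
    have h2 := hgrad (x k) (x (k + 1))
    have e1 : ⟪H' (x k), x (k + 1) - x k⟫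
        = ⟪x (k + 1), H' (x k)⟫ - ⟪x k, H' (x k)⟫ := by
      rw [inner_sub_right, real_inner_comm (x (k+1)), real_inner_comm (x k)]
    have e2 : ⟪H' (x k), z - x k⟫ = ⟪z, H' (x k)⟫ - ⟪x k, H' (x k)⟫ := by
      rw [inner_sub_right, real_inner_comm z, real_inner_comm (x k)]
    rw [e1] at h2
    rw [e2]
    simp only [hF]
    linarith
  -- take limits
  have limInner : Tendsto (fun j => ⟪H' (x (ψ j)), z - x (ψ j)⟫) atTop
      (𝓝 ⟪H' xstar, z - xstar⟫) := by
    have h1 : Tendsto (fun j => H' (x (ψ j))) atTop (𝓝 (H' xstar)) :=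
      (hH'cont.continuousAt.tendsto).comp hψt
    have h2 : Tendsto (fun j => z - x (ψ j)) atTop (𝓝 (z - xstar)) :=
      tendsto_const_nhds.sub hψt
    exact h1.inner h2
  have limH : Tendsto (fun j => H (x (ψ j))) atTop (𝓝 (H xstar)) :=
    (Hcont.continuousAt.tendsto).comp hψt
  have limAll : Tendsto (fun j => F (x (ψ j + 1)) + H (x (ψ j))
      + ⟪H' (x (ψ j)), z - x (ψ j)⟫) atTop
      (𝓝 (F xstar + H xstar + ⟪H' xstar, z - xstar⟫)) :=
    (limF1.add limH).add limInner
  have final : F xstar + H xstar + ⟪H' xstar, z - xstar⟫ ≤ G z :=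
    le_of_tendsto limAll (Eventually.of_forall fun j => key (ψ j))
  simp only [hF] at final
  linarith
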